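/- arXiv:0903.4278 — 6 statements merged into one kernel-verified Lean document; each statement's English description precedes it below -/
import Mathlib

section
/- Let Ψ* be the ℂ-algebra endomorphism of ℂ[x,y,z,t] fixing x, z, t and sending y to (1-x)y - x - z² - t³. Then Ψ*(x²y + z² + x + t³) = (1-x)(x²y + (1+x)(z²+x+t³)). -/
open MvPolynomial

/-- The endomorphism Ψ* of ℂ[x,y,z,t] fixing x,z,t and sending y to (1-x)y - x - z² - t³. -/
noncomputable def PsiStar : MvPolynomial (Fin 4) ℂ →ₐ[ℂ] MvPolynomial (Fin 4) ℂ :=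
  aeval ![X 0, (1 - X 0) * X 1 - X 0 - X 2 ^ 2 - X 3 ^ 3, X 2, X 3]

theorem stmt1 :
    PsiStar (X 0 ^ 2 * X 1 + X 2 ^ 2 + X 0 + X 3 ^ 3) =
      (1 - X 0) * (X 0 ^ 2 * X 1 + (1 + X 0) * (X 2 ^ 2 + X 0 + X 3 ^ 3)) := by
  simp only [PsiStar, map_add, map_mul, map_pow, aeval_X]
  simp only [Fin.isValue, Matrix.cons_val_zero, Matrix.cons_val_one, Matrix.head_cons,
    Matrix.cons_val_two, Matrix.tail_cons, Matrix.cons_val_three, Matrix.head_fin_const]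
  ring
end

section
/- For every c ∈ ℂ, the ℂ-algebra ℂ[x,y,z,t]/(x²y + (1+x)(z²+x+t³) - c) is isomorphic to ℂ[x,y,z,t]/(x²y + z² + (1+c)x + t³ - c). -/
open MvPolynomial

noncomputable def sg (c : ℂ) : MvPolynomial (Fin 4) ℂ →ₐ[ℂ] MvPolynomial (Fin 4) ℂ :=
  aeval ![X 0, (1 + X 0) * X 1 + C c, X 2, X 3]

noncomputable def tu : MvPolynomial (Fin 4) ℂ →ₐ[ℂ] MvPolynomial (Fin 4) ℂ :=
  aeval ![X 0, (1 - X 0) * X 1 - X 2 ^ 2 - X 0 - X 3 ^ 3, X 2, X 3]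

theorem stmt4 (c : ℂ) :
    Nonempty
      ((MvPolynomial (Fin 4) ℂ ⧸
          Ideal.span {X 0 ^ 2 * X 1 + (1 + X 0) * (X 2 ^ 2 + X 0 + X 3 ^ 3) - C c}) ≃ₐ[ℂ]
        (MvPolynomial (Fin 4) ℂ ⧸
          Ideal.span {X 0 ^ 2 * X 1 + X 2 ^ 2 + (1 + C c) * X 0 + X 3 ^ 3 - C c})) := by
  set Q : MvPolynomial (Fin 4) ℂ :=
    X 0 ^ 2 * X 1 + (1 + X 0) * (X 2 ^ 2 + X 0 + X 3 ^ 3) - C c with hQ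
  set F : MvPolynomial (Fin 4) ℂ :=
    X 0 ^ 2 * X 1 + X 2 ^ 2 + (1 + C c) * X 0 + X 3 ^ 3 - C c with hF
  have hsQ : sg c Q = (1 + X 0) * F := by
    simp only [hQ, hF, sg, map_add, map_sub, map_mul, map_pow, map_one, aeval_X, aeval_C,
      algebraMap_eq, Matrix.cons_val_zero, Matrix.cons_val_one, Matrix.head_cons,
      Matrix.cons_val_two, Matrix.cons_val_three, Matrix.tail_cons]
    ring
  have htF : tu F = (1 - X 0) * Q := by
    simp only [hQ, hF, tu, map_add, map_sub, map_mul, map_pow, map_one, aeval_X, aeval_C,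
      algebraMap_eq, Matrix.cons_val_zero, Matrix.cons_val_one, Matrix.head_cons,
      Matrix.cons_val_two, Matrix.cons_val_three, Matrix.tail_cons]
    ring
  set I := Ideal.span {Q} with hI
  set J := Ideal.span {F} with hJ
  have hFJ : Ideal.Quotient.mk J F = 0 := by
    rw [Ideal.Quotient.eq_zero_iff_mem, hJ]; exact Ideal.subset_span rfl
  have hQI : Ideal.Quotient.mk I Q = 0 := by
    rw [Ideal.Quotient.eq_zero_iff_mem, hI]; exact Ideal.subset_span rfl
  have hfker : ∀ a ∈ I, ((Ideal.Quotient.mkₐ ℂ J).comp (sg c)) a = 0 := by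
    intro a ha
    rw [hI, Ideal.mem_span_singleton] at ha
    obtain ⟨r, rfl⟩ := ha
    simp only [AlgHom.comp_apply, map_mul, hsQ, Ideal.Quotient.mkₐ_eq_mk, map_mul, hFJ,
      mul_zero, zero_mul]
  have hgker : ∀ a ∈ J, ((Ideal.Quotient.mkₐ ℂ I).comp tu) a = 0 := by
    intro a ha
    rw [hJ, Ideal.mem_span_singleton] at ha
    obtain ⟨r, rfl⟩ := ha
    simp only [AlgHom.comp_apply, map_mul, htF, Ideal.Quotient.mkₐ_eq_mk, map_mul, hQI,
      mul_zero, zero_mul]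
  let f := Ideal.Quotient.liftₐ I ((Ideal.Quotient.mkₐ ℂ J).comp (sg c)) hfker
  let g := Ideal.Quotient.liftₐ J ((Ideal.Quotient.mkₐ ℂ I).comp tu) hgker
  have hf : ∀ p, f (Ideal.Quotient.mk I p) = Ideal.Quotient.mk J (sg c p) := fun p => rfl
  have hg : ∀ p, g (Ideal.Quotient.mk J p) = Ideal.Quotient.mk I (tu p) := fun p => rfl
  have key1 : ∀ i : Fin 4, tu (sg c (X i)) - X i ∈ I := by
    intro i
    fin_cases i
    · show tu (sg c (X 0)) - X 0 ∈ I
      simp only [sg, tu, aeval_X, Matrix.cons_val_zero, sub_self]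
      exact I.zero_mem
    · show tu (sg c (X 1)) - X 1 ∈ I
      have : tu (sg c (X 1)) - X 1 = -1 * Q := by
        simp only [hQ, sg, tu, map_add, map_sub, map_mul, map_pow, map_one, aeval_X, aeval_C,
          algebraMap_eq, Matrix.cons_val_zero, Matrix.cons_val_one, Matrix.head_cons,
          Matrix.cons_val_two, Matrix.cons_val_three, Matrix.tail_cons]
        ring
      rw [this, hI, Ideal.mem_span_singleton]
      exact ⟨-1, by ring⟩
    · show tu (sg c (X 2)) - X 2 ∈ I
      simp only [sg, tu, aeval_X, Matrix.cons_val_two, Matrix.tail_cons, Matrix.head_cons,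
        sub_self]
      exact I.zero_mem
    · show tu (sg c (X 3)) - X 3 ∈ I
      simp only [sg, tu, aeval_X, Matrix.cons_val_three, Matrix.tail_cons, Matrix.head_cons,
        sub_self]
      exact I.zero_mem
  have key2 : ∀ i : Fin 4, sg c (tu (X i)) - X i ∈ J := by
    intro i
    fin_cases i
    · show sg c (tu (X 0)) - X 0 ∈ J
      simp only [sg, tu, aeval_X, Matrix.cons_val_zero, sub_self]
      exact J.zero_mem
    · show sg c (tu (X 1)) - X 1 ∈ J
      have : sg c (tu (X 1)) - X 1 = -1 * F := by
        simp only [hF, sg, tu, map_add, map_sub, map_mul, map_pow, map_one, aeval_X, aeval_C,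
          algebraMap_eq, Matrix.cons_val_zero, Matrix.cons_val_one, Matrix.head_cons,
          Matrix.cons_val_two, Matrix.cons_val_three, Matrix.tail_cons]
        ring
      rw [this, hJ, Ideal.mem_span_singleton]
      exact ⟨-1, by ring⟩
    · show sg c (tu (X 2)) - X 2 ∈ J
      simp only [sg, tu, aeval_X, Matrix.cons_val_two, Matrix.tail_cons, Matrix.head_cons,
        sub_self]
      exact J.zero_mem
    · show sg c (tu (X 3)) - X 3 ∈ J
      simp only [sg, tu, aeval_X, Matrix.cons_val_three, Matrix.tail_cons, Matrix.head_cons,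
        sub_self]
      exact J.zero_mem
  have hgf : g.comp f = AlgHom.id ℂ _ := by
    apply Ideal.Quotient.algHom_ext
    apply MvPolynomial.algHom_ext
    intro i
    simp only [AlgHom.comp_apply, Ideal.Quotient.mkₐ_eq_mk, AlgHom.id_apply]
    rw [hf, hg, Ideal.Quotient.eq]
    exact key1 i
  have hfg : f.comp g = AlgHom.id ℂ _ := by
    apply Ideal.Quotient.algHom_ext
    apply MvPolynomial.algHom_ext
    intro i
    simp only [AlgHom.comp_apply, Ideal.Quotient.mkₐ_eq_mk, AlgHom.id_apply]
    rw [hg, hf, Ideal.Quotient.eq]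
    exact key2 i
  exact ⟨AlgEquiv.ofAlgHom f g hfg hgf⟩
end

section
/- Every ℂ-algebra automorphism of ℂ[z,t] that fixes the polynomial z² + t³ is one of exactly six maps, each of the form z ↦ εz, t ↦ ωt where ε² = 1 and ω³ = 1. -/
open MvPolynomial

noncomputable section
namespace Stmt8Aux

def eIso : MvPolynomial (Fin 2) ℂ ≃ₐ[ℂ] Polynomial (Polynomial ℂ) :=
  (MvPolynomial.finSuccEquiv ℂ 1).trans
    (Polynomial.mapAlgEquiv
      ((MvPolynomial.renameEquiv ℂ (Equiv.equivPUnit.{1,1} (Fin 1))).trans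
        (MvPolynomial.pUnitAlgEquiv ℂ)))

lemma eIso_X0 : eIso (MvPolynomial.X 0) = Polynomial.X := by
  simp [eIso, MvPolynomial.finSuccEquiv_X_zero]

lemma eIso_X1 : eIso (MvPolynomial.X 1) = Polynomial.C Polynomial.X := by
  have h1 : (1 : Fin 2) = Fin.succ 0 := rfl
  rw [eIso]
  simp only [AlgEquiv.trans_apply, h1, MvPolynomial.finSuccEquiv_X_succ]
  simp [Polynomial.mapAlgEquiv]

abbrev TT : Type := Polynomial ℂ
abbrev BB : Type := Polynomial TT

def cc : TT := Polynomial.X ^ 3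
def fB : BB := Polynomial.X ^ 2 + Polynomial.C cc

def sig : TT →ₐ[ℂ] Polynomial ℂ := Polynomial.aeval (-(Polynomial.X ^ 2))

def th : BB →ₐ[ℂ] Polynomial ℂ :=
  Polynomial.eval₂AlgHom (sig) (Polynomial.X ^ 3) (fun a => (Commute.all _ _))

@[simp] lemma th_C (a : TT) : th (Polynomial.C a) = sig a := by
  simp [th, Polynomial.eval₂AlgHom_apply]

@[simp] lemma th_X : th Polynomial.X = Polynomial.X ^ 3 := by
  simp [th, Polynomial.eval₂AlgHom_apply]

@[simp] lemma sig_X : sig Polynomial.X = -(Polynomial.X ^ 2) := by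
  simp [sig]

lemma th_fB : th fB = 0 := by
  have : th fB = (Polynomial.X ^ 3) ^ 2 + sig cc := by
    simp [fB, th, Polynomial.eval₂AlgHom_apply]
  rw [this]
  have : sig cc = -(Polynomial.X ^ 6) := by
    simp [cc, sig]; ring
  rw [this]; ring

lemma fB_monic : fB.Monic := Polynomial.monic_X_pow_add_C cc (by norm_num)

lemma sig_eq_comp (a : TT) : sig a = a.comp (-(Polynomial.X ^ 2)) := by
  rw [sig, Polynomial.aeval_def, Polynomial.comp, Polynomial.algebraMap_eq]

lemma sig_ne_zero {a : TT} (ha : a ≠ 0) : sig a ≠ 0 := by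
  rw [sig_eq_comp]
  intro h
  have hq : (-(Polynomial.X ^ 2) : Polynomial ℂ).natDegree ≠ 0 := by
    simp [Polynomial.natDegree_neg]
  have := Polynomial.leadingCoeff_comp (p := a) hq
  rw [h] at this
  simp only [Polynomial.leadingCoeff_zero] at this
  have h1 : a.leadingCoeff ≠ 0 := Polynomial.leadingCoeff_ne_zero.2 ha
  have h2 : (-(Polynomial.X ^ 2) : Polynomial ℂ).leadingCoeff ≠ 0 := by
    apply Polynomial.leadingCoeff_ne_zero.2; intro h; simpa [h] using hq
  exact (mul_ne_zero h1 (pow_ne_zero _ h2)) this.symm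

lemma natDegree_sig (a : TT) : (sig a).natDegree = 2 * a.natDegree := by
  rw [sig_eq_comp, Polynomial.natDegree_comp]
  simp [Polynomial.natDegree_neg, mul_comm]

lemma sig_parity {a b : TT} (h : Polynomial.X ^ 3 * sig a + sig b = 0) : a = 0 ∧ b = 0 := by
  by_cases ha : a = 0
  · subst ha
    simp only [map_zero, mul_zero, zero_add] at h
    refine ⟨rfl, ?_⟩
    by_contra hb
    exact sig_ne_zero hb h
  · exfalso
    by_cases hb : b = 0
    · rw [hb] at h
      simp only [map_zero, add_zero, mul_eq_zero] at h
      rcases h with h | h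
      · exact pow_ne_zero 3 Polynomial.X_ne_zero h
      · exact sig_ne_zero ha h
    · have hEq : Polynomial.X ^ 3 * sig a = -sig b := by linear_combination h
      have hd := congrArg Polynomial.natDegree hEq
      rw [Polynomial.natDegree_mul (pow_ne_zero 3 Polynomial.X_ne_zero) (sig_ne_zero ha),
        Polynomial.natDegree_neg, Polynomial.natDegree_X_pow, natDegree_sig, natDegree_sig] at hd
      omega


lemma th_ker {W : BB} (hW : th W = 0) : fB ∣ W := by
  have hdiv := Polynomial.modByMonic_add_div W fB
  set r := W %ₘ fB with hr
  have hthr : th r = 0 := by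
    have := congrArg th hdiv
    rw [map_add, map_mul, th_fB, zero_mul, add_zero, hW] at this
    exact this
  have hdeg : r.natDegree ≤ 1 := by
    have h1 : r.degree < fB.degree := Polynomial.degree_modByMonic_lt W fB_monic
    have h2 : fB.degree = 2 := by
      rw [fB]; exact Polynomial.degree_X_pow_add_C (by norm_num) cc
    rw [h2] at h1
    by_cases hr0 : r = 0
    · simp [hr0]
    · have := Polynomial.natDegree_lt_iff_degree_lt (p := r) (n := 2) hr0
      have h3 : r.natDegree < 2 := this.mpr (by exact_mod_cast h1)
      omega
  have hrep := Polynomial.eq_X_add_C_of_natDegree_le_one hdeg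
  rw [hrep, map_add, map_mul, th_C, th_C, th_X, mul_comm] at hthr
  obtain ⟨h1, h0⟩ := sig_parity hthr
  have : r = 0 := by rw [hrep, h1, h0]; simp
  exact (Polynomial.modByMonic_eq_zero_iff_dvd fB_monic).1 (hr ▸ this)


lemma exists_g {u v : Polynomial ℂ} (huv : u ^ 2 + v ^ 3 = 0) (hv : v ≠ 0) :
    ∃ g : Polynomial ℂ, u = -g ^ 3 ∧ v = -g ^ 2 := by
  set L := FractionRing (Polynomial ℂ)
  set ι := algebraMap (Polynomial ℂ) L with hι
  have hinj : Function.Injective ι := IsFractionRing.injective _ _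
  have hvL : ι v ≠ 0 := fun h => hv (hinj (by simpa using h))
  set x : L := ι u / ι v with hx
  have hx2 : x ^ 2 = -(ι v) := by
    have huvL : (ι u) ^ 2 = -(ι v) ^ 3 := by
      have := congrArg ι huv
      push_cast [map_add, map_pow, map_zero] at this
      linear_combination this
    rw [hx, div_pow, div_eq_iff (pow_ne_zero 2 hvL)]
    linear_combination huvL
  have hint : IsIntegral (Polynomial ℂ) x := by
    refine ⟨Polynomial.X ^ 2 + Polynomial.C v, Polynomial.monic_X_pow_add_C v (by norm_num), ?_⟩
    simp [Polynomial.eval₂_add, Polynomial.eval₂_pow, hx2]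
    exact neg_add_cancel _
  obtain ⟨g', hg'⟩ := IsIntegrallyClosed.isIntegral_iff.mp hint
  have hg2 : g' ^ 2 = -v := by
    apply hinj
    rw [map_pow, hg', hx2, map_neg]
  have hgv : g' * v = u := by
    apply hinj
    rw [map_mul, hg', hx]
    exact div_mul_cancel₀ _ hvL
  refine ⟨g', ?_, ?_⟩
  · linear_combination -hgv + g' * hg2
  · linear_combination hg2


def vals : Fin 2 → Polynomial ℂ := ![-(Polynomial.X ^ 3), -(Polynomial.X ^ 2)]

lemma aeval_vals_coeff_one (W : MvPolynomial (Fin 2) ℂ) :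
    (MvPolynomial.aeval vals W).coeff 1 = 0 := by
  induction W using MvPolynomial.induction_on with
  | C a =>
    rw [MvPolynomial.aeval_C]
    simp [Polynomial.algebraMap_eq, Polynomial.coeff_C]
  | add p q hp hq => rw [map_add, Polynomial.coeff_add, hp, hq, add_zero]
  | mul_X p i hp =>
    rw [map_mul, MvPolynomial.aeval_X]
    fin_cases i
    · show (_ * vals 0).coeff 1 = 0
      rw [show vals 0 = -(Polynomial.X ^ 3) from rfl, mul_neg, Polynomial.coeff_neg,
        Polynomial.coeff_mul_X_pow']
      norm_num
    · show (_ * vals 1).coeff 1 = 0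
      rw [show vals 1 = -(Polynomial.X ^ 2) from rfl, mul_neg, Polynomial.coeff_neg,
        Polynomial.coeff_mul_X_pow']
      norm_num

lemma aeval_eq_comp_g (g : Polynomial ℂ) (ψ : MvPolynomial (Fin 2) ℂ →ₐ[ℂ] Polynomial ℂ)
    (h0 : ψ (MvPolynomial.X 0) = -g ^ 3) (h1 : ψ (MvPolynomial.X 1) = -g ^ 2)
    (W : MvPolynomial (Fin 2) ℂ) :
    ψ W = (MvPolynomial.aeval vals W).comp g := by
  have hcomp : ∀ p : Polynomial ℂ, p.comp g = Polynomial.aeval g p := by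
    intro p
    rw [Polynomial.aeval_def, Polynomial.comp, Polynomial.algebraMap_eq]
  rw [hcomp]
  have : ψ = (Polynomial.aeval g).comp (MvPolynomial.aeval vals) := by
    apply MvPolynomial.algHom_ext
    intro i
    fin_cases i
    · simp only [AlgHom.comp_apply, MvPolynomial.aeval_X, h0]
      show _ = Polynomial.aeval g (vals 0)
      rw [show vals 0 = -(Polynomial.X ^ 3) from rfl]
      simp
      try exact h0
    · simp only [AlgHom.comp_apply, MvPolynomial.aeval_X, h1]
      show _ = Polynomial.aeval g (vals 1)
      rw [show vals 1 = -(Polynomial.X ^ 2) from rfl]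
      simp
      try exact h1
  rw [this, AlgHom.comp_apply]

lemma aeval_zero_vals (ψ : MvPolynomial (Fin 2) ℂ →ₐ[ℂ] Polynomial ℂ)
    (h0 : ψ (MvPolynomial.X 0) = 0) (h1 : ψ (MvPolynomial.X 1) = 0)
    (W : MvPolynomial (Fin 2) ℂ) : ∃ c : ℂ, ψ W = Polynomial.C c := by
  induction W using MvPolynomial.induction_on with
  | C a => exact ⟨a, by rw [MvPolynomial.algHom_C]; simp [Polynomial.algebraMap_eq]⟩
  | add p q hp hq =>
    obtain ⟨c1, hc1⟩ := hp; obtain ⟨c2, hc2⟩ := hq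
    exact ⟨c1 + c2, by rw [map_add, hc1, hc2, Polynomial.C_add]⟩
  | mul_X p i hp =>
    refine ⟨0, ?_⟩
    rw [map_mul]
    fin_cases i
    · show ψ p * ψ (MvPolynomial.X 0) = _
      rw [h0, mul_zero, Polynomial.C_0]
    · show ψ p * ψ (MvPolynomial.X 1) = _
      rw [h1, mul_zero, Polynomial.C_0]


lemma eIso_CX0 (a : ℂ) : eIso (MvPolynomial.C a * MvPolynomial.X 0)
    = Polynomial.C (Polynomial.C a) * Polynomial.X := by
  rw [map_mul, eIso_X0]
  congr 1
  rw [show (MvPolynomial.C a : MvPolynomial (Fin 2) ℂ) = algebraMap ℂ _ a from rfl,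
    AlgEquiv.commutes]
  simp [Polynomial.algebraMap_apply, Polynomial.algebraMap_eq]

lemma eIso_CX1 (a : ℂ) : eIso (MvPolynomial.C a * MvPolynomial.X 1)
    = Polynomial.C (Polynomial.C a * Polynomial.X) := by
  rw [map_mul, eIso_X1]
  rw [show (MvPolynomial.C a : MvPolynomial (Fin 2) ℂ) = algebraMap ℂ _ a from rfl,
    AlgEquiv.commutes]
  simp [Polynomial.algebraMap_apply, Polynomial.algebraMap_eq]

lemma norm_lemma (φ : MvPolynomial (Fin 2) ℂ ≃ₐ[ℂ] MvPolynomial (Fin 2) ℂ)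
    (hφ : φ (MvPolynomial.X 0 ^ 2 + MvPolynomial.X 1 ^ 3)
        = MvPolynomial.X 0 ^ 2 + MvPolynomial.X 1 ^ 3) :
    ∃ (ε ω : ℂ) (R S : BB), ε ≠ 0 ∧ ω ≠ 0 ∧ ω ^ 3 = ε ^ 2 ∧
      eIso (φ (MvPolynomial.X 0)) = Polynomial.C (Polynomial.C ε) * Polynomial.X + fB * R ∧
      eIso (φ (MvPolynomial.X 1))
        = Polynomial.C (Polynomial.C ω * Polynomial.X) + fB * S := by
  set PB := eIso (φ (MvPolynomial.X 0)) with hPB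
  set QB := eIso (φ (MvPolynomial.X 1)) with hQB
  have hPQ : PB ^ 2 + QB ^ 3 = fB := by
    have h1 : φ (MvPolynomial.X 0) ^ 2 + φ (MvPolynomial.X 1) ^ 3
        = MvPolynomial.X 0 ^ 2 + MvPolynomial.X 1 ^ 3 := by
      rw [← map_pow, ← map_pow, ← map_add, hφ]
    have h2 := congrArg eIso h1
    rw [map_add, map_add, map_pow, map_pow, map_pow, map_pow, eIso_X0, eIso_X1] at h2
    rw [hPB, hQB, h2, fB, cc, ← Polynomial.C_pow]
  set Ψ : MvPolynomial (Fin 2) ℂ →ₐ[ℂ] Polynomial ℂ :=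
    th.comp (eIso.toAlgHom.comp φ.toAlgHom) with hΨ
  have hΨ0 : Ψ (MvPolynomial.X 0) = th PB := rfl
  have hΨ1 : Ψ (MvPolynomial.X 1) = th QB := rfl
  set u := th PB with hu
  set v := th QB with hv
  have huv : u ^ 2 + v ^ 3 = 0 := by
    have := congrArg th hPQ
    rw [map_add, map_pow, map_pow, th_fB] at this
    exact this
  have hW2 : Ψ (φ.symm (MvPolynomial.X 0)) = Polynomial.X ^ 3 := by
    simp only [hΨ, AlgHom.comp_apply, AlgEquiv.coe_algHom, AlgEquiv.apply_symm_apply]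
    rw [eIso_X0, th_X]
  have hW1 : Ψ (φ.symm (MvPolynomial.X 1)) = -(Polynomial.X ^ 2) := by
    simp only [hΨ, AlgHom.comp_apply, AlgEquiv.coe_algHom, AlgEquiv.apply_symm_apply]
    rw [eIso_X1, th_C, sig_X]
  have hvne : v ≠ 0 := by
    intro hv0
    have hu0 : u = 0 := by
      have : u ^ 2 = 0 := by rw [← huv, hv0]; ring
      exact pow_eq_zero_iff (by norm_num) |>.mp this
    obtain ⟨c, hc⟩ := aeval_zero_vals Ψ (hΨ0.trans hu0) (hΨ1.trans hv0) (φ.symm (MvPolynomial.X 1))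
    rw [hW1] at hc
    have := congrArg (fun p => Polynomial.coeff p 2) hc
    simp [Polynomial.coeff_C] at this
  obtain ⟨g, hgu, hgv⟩ := exists_g huv hvne
  have hcomp := aeval_eq_comp_g g Ψ (hΨ0.trans hgu) (hΨ1.trans hgv)
  have hc2 := (hcomp (φ.symm (MvPolynomial.X 0))).symm.trans hW2
  have hc1 := (hcomp (φ.symm (MvPolynomial.X 1))).symm.trans hW1
  -- degrees
  have hdg : g.natDegree = 1 := by
    have h3 := congrArg Polynomial.natDegree hc2
    have h2 := congrArg Polynomial.natDegree hc1
    rw [Polynomial.natDegree_comp, Polynomial.natDegree_X_pow] at h3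
    rw [Polynomial.natDegree_comp, Polynomial.natDegree_neg, Polynomial.natDegree_X_pow] at h2
    have hd3 : g.natDegree ∣ 3 := ⟨_, by rw [← h3, mul_comm]⟩
    have hd2 : g.natDegree ∣ 2 := ⟨_, by rw [← h2, mul_comm]⟩
    have : g.natDegree ∣ 1 := by
      have := Nat.dvd_gcd hd2 hd3
      simpa using this
    exact Nat.dvd_one.mp this
  set γ := g.coeff 1 with hγdef
  set δ := g.coeff 0 with hδdef
  have hγ : γ ≠ 0 := by
    have hgne : g ≠ 0 := fun h => by simp [h] at hdg
    have := Polynomial.leadingCoeff_ne_zero.mpr hgne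
    rwa [Polynomial.leadingCoeff, hdg] at this
  have hgrep : g = Polynomial.C γ * Polynomial.X + Polynomial.C δ :=
    Polynomial.eq_X_add_C_of_natDegree_le_one hdg.le
  have hδ : δ = 0 := by
    set w1 := MvPolynomial.aeval vals (φ.symm (MvPolynomial.X 1)) with hw1def
    have hw1c : w1.coeff 1 = 0 := aeval_vals_coeff_one _
    set ginv : Polynomial ℂ := Polynomial.C γ⁻¹ * (Polynomial.X - Polynomial.C δ) with hginv
    have hCinv : (Polynomial.C γ : Polynomial ℂ) * Polynomial.C γ⁻¹ = 1 := by
      rw [← Polynomial.C_mul, mul_inv_cancel₀ hγ, Polynomial.C_1]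
    have hgg : g.comp ginv = Polynomial.X := by
      rw [hgrep, hginv]
      simp only [Polynomial.add_comp, Polynomial.mul_comp, Polynomial.C_comp, Polynomial.X_comp]
      rw [show (Polynomial.C γ : Polynomial ℂ) * (Polynomial.C γ⁻¹ * (Polynomial.X - Polynomial.C δ))
        = (Polynomial.C γ * Polynomial.C γ⁻¹) * (Polynomial.X - Polynomial.C δ) by ring, hCinv]
      ring
    have hw1 : w1 = (-(Polynomial.X ^ 2)).comp ginv := by
      have h := congrArg (fun p => p.comp ginv) hc1
      rw [Polynomial.comp_assoc, hgg, Polynomial.comp_X] at h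
      exact h
    have hexp : ginv ^ 2 = Polynomial.C (γ⁻¹ * γ⁻¹) * Polynomial.X ^ 2
        - Polynomial.C (γ⁻¹ * γ⁻¹ * (2 * δ)) * Polynomial.X
        + Polynomial.C (γ⁻¹ * γ⁻¹ * (δ * δ)) := by
      rw [hginv]
      simp only [Polynomial.C_mul, map_ofNat]
      ring
    have h0 := hw1c
    rw [hw1] at h0
    rw [Polynomial.neg_comp, Polynomial.pow_comp, Polynomial.X_comp, Polynomial.coeff_neg,
      hexp] at h0
    simp only [Polynomial.coeff_add, Polynomial.coeff_sub, Polynomial.coeff_C_mul,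
      Polynomial.coeff_X_pow, Polynomial.coeff_X_one, Polynomial.coeff_C] at h0
    norm_num at h0
    rcases h0 with h | h
    · exact absurd h hγ
    · exact h
  have hgX : g = Polynomial.C γ * Polynomial.X := by
    rw [hgrep, hδ, Polynomial.C_0, add_zero]
  have hthP : th (PB - Polynomial.C (Polynomial.C (-γ ^ 3)) * Polynomial.X) = 0 := by
    rw [map_sub, map_mul, th_C, th_X]
    have hsC : sig (Polynomial.C (-γ ^ 3)) = Polynomial.C (-γ ^ 3) := by
      rw [sig, Polynomial.aeval_C, Polynomial.algebraMap_eq]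
    rw [hsC, show th PB = u from rfl, hgu, hgX]
    simp only [Polynomial.C_neg, Polynomial.C_pow]
    ring
  have hthQ : th (QB - Polynomial.C (Polynomial.C (γ ^ 2) * Polynomial.X)) = 0 := by
    rw [map_sub, th_C]
    have hs : sig (Polynomial.C (γ ^ 2) * Polynomial.X) = -(Polynomial.C (γ ^ 2) * Polynomial.X ^ 2) := by
      rw [map_mul, sig_X, sig, Polynomial.aeval_C, Polynomial.algebraMap_eq]
      ring
    rw [hs, show th QB = v from rfl, hgv, hgX]
    simp only [Polynomial.C_pow]
    ring
  obtain ⟨R, hR⟩ := th_ker hthP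
  obtain ⟨S, hS⟩ := th_ker hthQ
  refine ⟨-γ ^ 3, γ ^ 2, R, S, by simp [hγ], by simp [hγ], by ring, ?_, ?_⟩
  · rw [hPB] at hR ⊢
    linear_combination hR
  · rw [hQB] at hS ⊢
    linear_combination hS

open UniqueFactorizationMonoid UniqueFactorizationDomain in
lemma mason_bound {K : Type} [Field K] {P Q : Polynomial K} {κ : K}
    (h2K : (2 : K) ≠ 0) (hκ : κ ≠ 0) (hP : P ≠ 0) (hQ : Q ≠ 0)
    (h : P ^ 2 + Q ^ 3 = Polynomial.X ^ 2 + Polynomial.C κ) :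
    P.natDegree ≤ 3 ∧ Q.natDegree ≤ 2 := by
  classical
  set f : Polynomial K := Polynomial.X ^ 2 + Polynomial.C κ with hfdef
  have hfmon : f.Monic := Polynomial.monic_X_pow_add_C κ (by norm_num)
  have hf0 : f ≠ 0 := hfmon.ne_zero
  have hdf : Polynomial.derivative f = Polynomial.C 2 * Polynomial.X := by
    rw [hfdef]
    simp [Polynomial.derivative_X_pow]
    rw [one_add_one_eq_two, map_ofNat]
  have hsep : IsCoprime f (Polynomial.derivative f) := by
    rw [hdf]
    refine ⟨Polynomial.C κ⁻¹, -(Polynomial.C κ⁻¹ * Polynomial.C 2⁻¹ * Polynomial.X), ?_⟩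
    have e1 : (Polynomial.C κ⁻¹ : Polynomial K) * Polynomial.C κ = 1 := by
      rw [← Polynomial.C_mul, inv_mul_cancel₀ hκ, Polynomial.C_1]
    have e2 : (Polynomial.C (2⁻¹ : K) : Polynomial K) * Polynomial.C 2 = 1 := by
      rw [← Polynomial.C_mul, inv_mul_cancel₀ h2K, Polynomial.C_1]
    rw [hfdef]
    linear_combination e1 - (Polynomial.C κ⁻¹ * Polynomial.X ^ 2) * e2
  have hsq : Squarefree f := Polynomial.Separable.squarefree hsep
  have hcop : IsCoprime P Q := by
    rw [← EuclideanDomain.gcd_isUnit_iff]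
    by_contra hnu
    have hg0 : EuclideanDomain.gcd P Q ≠ 0 := fun hz => hP (EuclideanDomain.gcd_eq_zero_iff.mp hz).1
    obtain ⟨p, hpi, hpd⟩ := WfDvdMonoid.exists_irreducible_factor hnu hg0
    have hdP : p ∣ P := hpd.trans (EuclideanDomain.gcd_dvd_left _ _)
    have hdQ : p ∣ Q := hpd.trans (EuclideanDomain.gcd_dvd_right _ _)
    have hpp : p * p ∣ f := by
      rw [← h]
      refine dvd_add ?_ ?_
      · have : P ^ 2 = P * P := by ring
        rw [this]; exact mul_dvd_mul hdP hdP
      · have : Q ^ 3 = (Q * Q) * Q := by ring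
        rw [this]; exact (mul_dvd_mul hdQ hdQ).mul_right Q
    exact hpi.not_isUnit (hsq p hpp)
  have hfPco : IsCoprime f P := by
    rw [← EuclideanDomain.gcd_isUnit_iff]
    by_contra hnu
    have hg0 : EuclideanDomain.gcd f P ≠ 0 := fun hz => hf0 (EuclideanDomain.gcd_eq_zero_iff.mp hz).1
    obtain ⟨p, hpi, hpd⟩ := WfDvdMonoid.exists_irreducible_factor hnu hg0
    have hdf2 : p ∣ f := hpd.trans (EuclideanDomain.gcd_dvd_left _ _)
    have hdP : p ∣ P := hpd.trans (EuclideanDomain.gcd_dvd_right _ _)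
    have hdQ3 : p ∣ Q ^ 3 := by
      have hQ3 : Q ^ 3 = f - P ^ 2 := by linear_combination h
      rw [hQ3]
      exact dvd_sub hdf2 (dvd_pow hdP (by norm_num))
    have hdQ : p ∣ Q := (UniqueFactorizationMonoid.irreducible_iff_prime.mp hpi).dvd_of_dvd_pow hdQ3
    exact hpi.not_isUnit (hcop.isUnit_of_dvd' hdP hdQ)
  have hfQco : IsCoprime f Q := by
    rw [← EuclideanDomain.gcd_isUnit_iff]
    by_contra hnu
    have hg0 : EuclideanDomain.gcd f Q ≠ 0 := fun hz => hf0 (EuclideanDomain.gcd_eq_zero_iff.mp hz).1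
    obtain ⟨p, hpi, hpd⟩ := WfDvdMonoid.exists_irreducible_factor hnu hg0
    have hdf2 : p ∣ f := hpd.trans (EuclideanDomain.gcd_dvd_left _ _)
    have hdQ : p ∣ Q := hpd.trans (EuclideanDomain.gcd_dvd_right _ _)
    have hdP2 : p ∣ P ^ 2 := by
      have hP2 : P ^ 2 = f - Q ^ 3 := by linear_combination h
      rw [hP2]
      exact dvd_sub hdf2 (dvd_pow hdQ (by norm_num))
    have hdP : p ∣ P := (UniqueFactorizationMonoid.irreducible_iff_prime.mp hpi).dvd_of_dvd_pow hdP2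
    exact hpi.not_isUnit (hcop.isUnit_of_dvd' hdP hdQ)
  have hab : IsCoprime (P ^ 2) (Q ^ 3) := hcop.pow
  have hbc : IsCoprime (Q ^ 3) (-f) := (hfQco.symm.pow_left).neg_right
  have hca : IsCoprime (-f) (P ^ 2) := (hfPco.pow_right).neg_left
  have habc := Polynomial.abc (pow_ne_zero 2 hP) (pow_ne_zero 3 hQ) (neg_ne_zero.mpr hf0)
    hab (by linear_combination h)
  rcases habc with ⟨h1, h2, _⟩ | ⟨_, _, hdc⟩
  swap
  · exfalso
    rw [Polynomial.derivative_neg, hdf, neg_eq_zero, mul_eq_zero] at hdc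
    rcases hdc with hc | hc
    · exact (Polynomial.C_ne_zero.mpr h2K) hc
    · exact Polynomial.X_ne_zero hc
  · -- degree bound on the radical
    have hPQf0 : P ^ 2 * Q ^ 3 ≠ 0 := mul_ne_zero (pow_ne_zero _ hP) (pow_ne_zero _ hQ)
    have hcc : IsCoprime (P ^ 2 * Q ^ 3) f := IsCoprime.mul_left hfPco.symm.pow_left hfQco.symm.pow_left
    have hrad : radical (P ^ 2 * Q ^ 3 * -f) = radical P * radical Q * radical f := by
      have e1 : P ^ 2 * Q ^ 3 * -f = -(P ^ 2 * Q ^ 3 * f) := by ring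
      rw [e1, radical_neg, radical_mul hcc.isRelPrime, radical_mul hab.isRelPrime,
        radical_pow P (by norm_num : (2 : ℕ) ≠ 0), radical_pow Q (by norm_num : (3 : ℕ) ≠ 0)]
    have hradP : (radical P).natDegree ≤ P.natDegree :=
      Polynomial.natDegree_le_of_dvd (radical_dvd_self (a := P)) hP
    have hradQ : (radical Q).natDegree ≤ Q.natDegree :=
      Polynomial.natDegree_le_of_dvd (radical_dvd_self (a := Q)) hQ
    have hradf : (radical f).natDegree ≤ 2 := by
      have := Polynomial.natDegree_le_of_dvd (radical_dvd_self (a := f)) hf0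
      rwa [hfdef, Polynomial.natDegree_X_pow_add_C] at this
    have hD : (radical (P ^ 2 * Q ^ 3 * -f)).natDegree
        ≤ P.natDegree + Q.natDegree + 2 := by
      rw [hrad, Polynomial.natDegree_mul (mul_ne_zero (radical_ne_zero (a := P)) (radical_ne_zero (a := Q)))
        (radical_ne_zero (a := f)), Polynomial.natDegree_mul (radical_ne_zero (a := P)) (radical_ne_zero (a := Q))]
      omega
    rw [Polynomial.natDegree_pow] at h1 h2
    omega


end Stmt8Aux

open Stmt8Aux

/-- Every ℂ-algebra automorphism of ℂ[z,t] fixing z² + t³ is of the form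
z ↦ εz, t ↦ ωt with ε² = 1 and ω³ = 1; in particular there are exactly six of them. -/
theorem stmt8 (φ : MvPolynomial (Fin 2) ℂ ≃ₐ[ℂ] MvPolynomial (Fin 2) ℂ)
    (hφ : φ (X 0 ^ 2 + X 1 ^ 3) = X 0 ^ 2 + X 1 ^ 3) :
    ∃ ε ω : ℂ, ε ^ 2 = 1 ∧ ω ^ 3 = 1 ∧ φ (X 0) = C ε * X 0 ∧ φ (X 1) = C ω * X 1 := by
  obtain ⟨ε, ω, R, S, hε, hω, hεω, hPrep, hQrep⟩ := Stmt8Aux.norm_lemma φ hφ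
  set PB := eIso (φ (X 0)) with hPBdef
  set QB := eIso (φ (X 1)) with hQBdef
  have hPQ : PB ^ 2 + QB ^ 3 = fB := by
    have h1 : φ (X 0) ^ 2 + φ (X 1) ^ 3 = X 0 ^ 2 + X 1 ^ 3 := by
      rw [← map_pow, ← map_pow, ← map_add, hφ]
    have h2 := congrArg eIso h1
    rw [map_add, map_add, map_pow, map_pow, map_pow, map_pow, eIso_X0, eIso_X1] at h2
    rw [hPBdef, hQBdef, h2, fB, cc, ← Polynomial.C_pow]
  have hfB2 : fB = Polynomial.X ^ 2 + Polynomial.C cc := rfl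
  have hcc0 : cc ≠ 0 := pow_ne_zero 3 Polynomial.X_ne_zero
  have hfB0 : fB ≠ 0 := fB_monic.ne_zero
  have hfBdeg : fB.natDegree = 2 := by rw [hfB2, Polynomial.natDegree_X_pow_add_C]
  have hPB0 : PB ≠ 0 := by
    intro h0
    rw [h0] at hPrep
    by_cases hR : R = 0
    · rw [hR, mul_zero, add_zero] at hPrep
      have := congrArg (fun p => Polynomial.coeff (Polynomial.coeff p 1) 0) hPrep
      simp [Polynomial.coeff_C_mul] at this
      exact hε this.symm
    · have h1 := congrArg Polynomial.natDegree
        (show fB * R = -(Polynomial.C (Polynomial.C ε) * Polynomial.X) by linear_combination -hPrep)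
      rw [Polynomial.natDegree_mul hfB0 hR, hfBdeg, Polynomial.natDegree_neg,
        Polynomial.natDegree_C_mul (by simpa using hε), Polynomial.natDegree_X] at h1
      omega
  have hQB0 : QB ≠ 0 := by
    intro h0
    rw [h0] at hQrep
    by_cases hS : S = 0
    · rw [hS, mul_zero, add_zero] at hQrep
      have := congrArg (fun p => Polynomial.coeff (Polynomial.coeff p 0) 1) hQrep
      simp [Polynomial.coeff_C] at this
      exact hω this.symm
    · have h1 := congrArg Polynomial.natDegree
        (show fB * S = -(Polynomial.C (Polynomial.C ω * Polynomial.X)) by linear_combination -hQrep)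
      rw [Polynomial.natDegree_mul hfB0 hS, hfBdeg, Polynomial.natDegree_neg,
        Polynomial.natDegree_C] at h1
      omega
  have hdegP : PB.natDegree ≤ 3 ∧ QB.natDegree ≤ 2 := by
    set K := FractionRing TT with hK
    have hi : Function.Injective (algebraMap TT K) := IsFractionRing.injective _ _
    set μ : BB →+* Polynomial K := Polynomial.mapRingHom (algebraMap TT K) with hμ
    have hμinj : Function.Injective μ := Polynomial.map_injective _ hi
    have hμP : μ PB ≠ 0 := fun h => hPB0 (hμinj (by simpa using h))
    have hμQ : μ QB ≠ 0 := fun h => hQB0 (hμinj (by simpa using h))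
    have h2K : (2 : K) ≠ 0 := by
      intro h2
      have h3 : algebraMap TT K 2 = 0 := by rw [map_ofNat]; exact h2
      exact (by norm_num : (2 : TT) ≠ 0) (hi (by rw [h3, map_zero]))
    have hκ : algebraMap TT K cc ≠ 0 := fun h => hcc0 (hi (by rw [h, map_zero]))
    have hPQK : (μ PB) ^ 2 + (μ QB) ^ 3
        = Polynomial.X ^ 2 + Polynomial.C (algebraMap TT K cc) := by
      have h4 := congrArg μ hPQ
      rw [map_add, map_pow, map_pow] at h4
      rw [h4, hfB2, hμ]
      simp [Polynomial.map_add, Polynomial.map_pow]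
    obtain ⟨h3, h2⟩ := mason_bound h2K hκ hμP hμQ hPQK
    constructor
    · have := Polynomial.natDegree_map_eq_of_injective hi PB
      rw [hμ] at h3
      simp only [Polynomial.coe_mapRingHom] at h3
      omega
    · have := Polynomial.natDegree_map_eq_of_injective hi QB
      rw [hμ] at h2
      simp only [Polynomial.coe_mapRingHom] at h2
      omega
  obtain ⟨hp3, hq2⟩ := hdegP
  have hRdeg : R.natDegree ≤ 1 := by
    by_cases hR : R = 0
    · simp [hR]
    · have e1 : fB * R = PB - Polynomial.C (Polynomial.C ε) * Polynomial.X := by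
        linear_combination -hPrep
      have e2 : (fB * R).natDegree ≤ 3 := by
        rw [e1]
        refine le_trans (Polynomial.natDegree_sub_le _ _) ?_
        have h5 : (Polynomial.C (Polynomial.C ε) * Polynomial.X : BB).natDegree ≤ 1 := by
          rw [Polynomial.natDegree_C_mul (by simpa using hε), Polynomial.natDegree_X]
        omega
      rw [Polynomial.natDegree_mul hfB0 hR, hfBdeg] at e2
      omega
  have hSdeg : S.natDegree ≤ 0 := by
    by_cases hS : S = 0
    · simp [hS]
    · have e1 : fB * S = QB - Polynomial.C (Polynomial.C ω * Polynomial.X) := by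
        linear_combination -hQrep
      have e2 : (fB * S).natDegree ≤ 2 := by
        rw [e1]
        refine le_trans (Polynomial.natDegree_sub_le _ _) ?_
        have h5 : (Polynomial.C (Polynomial.C ω * Polynomial.X) : BB).natDegree = 0 :=
          Polynomial.natDegree_C _
        omega
      rw [Polynomial.natDegree_mul hfB0 hS, hfBdeg] at e2
      omega
  set r1 := R.coeff 1 with hr1def
  set r0 := R.coeff 0 with hr0def
  set s0 := S.coeff 0 with hs0def
  have hRrep : R = Polynomial.C r1 * Polynomial.X + Polynomial.C r0 :=
    Polynomial.eq_X_add_C_of_natDegree_le_one hRdeg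
  have hSrep : S = Polynomial.C s0 := Polynomial.eq_C_of_natDegree_le_zero hSdeg
  have hMain : (Polynomial.C (Polynomial.C ε) * Polynomial.X
        + (Polynomial.X ^ 2 + Polynomial.C cc)
          * (Polynomial.C r1 * Polynomial.X + Polynomial.C r0)) ^ 2
      + (Polynomial.C (Polynomial.C ω * Polynomial.X)
        + (Polynomial.X ^ 2 + Polynomial.C cc) * Polynomial.C s0) ^ 3
      = Polynomial.X ^ 2 + Polynomial.C cc := by
    rw [← hfB2, ← hRrep, ← hSrep, ← hPrep, ← hQrep]
    exact hPQ
  have hA : (cc * r0) ^ 2 + (Polynomial.C ω * Polynomial.X + cc * s0) ^ 3 = cc := by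
    have := congrArg (Polynomial.eval (0 : TT)) hMain
    simpa using this
  have hr0 : r0 = 0 := by
    have hthis := congrArg (fun p => Polynomial.eval (0 : TT) (Polynomial.derivative p)) hMain
    simp [Polynomial.derivative_pow, Polynomial.derivative_mul] at hthis
    rcases hthis with (h | h) | h
    · exact absurd h hcc0
    · exact h
    · have h2 := congrArg (Polynomial.eval (0 : ℂ)) h
      simp [cc] at h2
      exact absurd h2 hε
  have hy : (Polynomial.C ω + Polynomial.X ^ 2 * s0 : TT) ^ 3 = 1 := by
    have h1 : (Polynomial.X : TT) ^ 3
        * ((Polynomial.C ω + Polynomial.X ^ 2 * s0) ^ 3 - 1) = 0 := by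
      rw [hr0] at hA
      rw [cc] at hA
      linear_combination hA
    rcases mul_eq_zero.mp h1 with h | h
    · exact absurd h (pow_ne_zero 3 Polynomial.X_ne_zero)
    · exact sub_eq_zero.mp h
  have hω3 : ω ^ 3 = 1 := by
    have := congrArg (Polynomial.eval (0 : ℂ)) hy
    simpa using this
  have hε2 : ε ^ 2 = 1 := by rw [← hεω]; exact hω3
  have hs0 : s0 = 0 := by
    by_contra hs
    have hyu : IsUnit (Polynomial.C ω + Polynomial.X ^ 2 * s0 : TT) := by
      refine IsUnit.of_mul_eq_one ((Polynomial.C ω + Polynomial.X ^ 2 * s0) ^ 2) ?_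
      calc (Polynomial.C ω + Polynomial.X ^ 2 * s0 : TT)
            * (Polynomial.C ω + Polynomial.X ^ 2 * s0) ^ 2
          = (Polynomial.C ω + Polynomial.X ^ 2 * s0) ^ 3 := by ring
        _ = 1 := hy
    obtain ⟨c, hcu, hc⟩ := Polynomial.isUnit_iff.mp hyu
    have heq : Polynomial.X ^ 2 * s0 = Polynomial.C (c - ω) := by
      rw [Polynomial.C_sub]
      linear_combination -hc
    have hdeg := congrArg Polynomial.natDegree heq
    rw [Polynomial.natDegree_mul (pow_ne_zero 2 Polynomial.X_ne_zero) hs,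
      Polynomial.natDegree_C] at hdeg
    simp [Polynomial.natDegree_pow] at hdeg
  have hQc : (Polynomial.C (Polynomial.C ω * Polynomial.X) : BB) ^ 3 = Polynomial.C cc := by
    rw [← Polynomial.C_pow]
    refine congrArg Polynomial.C ?_
    rw [mul_pow, ← Polynomial.C_pow, hω3, Polynomial.C_1, one_mul, cc]
  rw [hr0, hs0] at hMain
  simp only [Polynomial.C_0, mul_zero, zero_mul, add_zero, zero_add] at hMain
  have hP2 : (Polynomial.C (Polynomial.C ε)
      + (Polynomial.X ^ 2 + Polynomial.C cc) * Polynomial.C r1 : BB) ^ 2 * Polynomial.X ^ 2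
      = Polynomial.X ^ 2 := by
    linear_combination hMain - hQc
  have hr1 : r1 = 0 := by
    have hw2 : (Polynomial.C (Polynomial.C ε)
        + (Polynomial.X ^ 2 + Polynomial.C cc) * Polynomial.C r1 : BB) ^ 2 = 1 := by
      have hX2 : ((Polynomial.X : BB) ^ 2) ≠ 0 := pow_ne_zero 2 Polynomial.X_ne_zero
      exact mul_right_cancel₀ hX2 (hP2.trans (one_mul _).symm)
    have hwu : IsUnit (Polynomial.C (Polynomial.C ε)
        + (Polynomial.X ^ 2 + Polynomial.C cc) * Polynomial.C r1 : BB) := by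
      refine IsUnit.of_mul_eq_one (Polynomial.C (Polynomial.C ε)
        + (Polynomial.X ^ 2 + Polynomial.C cc) * Polynomial.C r1) ?_
      rw [← sq]; exact hw2
    obtain ⟨c, hcu, hc⟩ := Polynomial.isUnit_iff.mp hwu
    by_contra hr
    have hCr1 : (Polynomial.C r1 : BB) ≠ 0 := fun hh => hr (by
      simpa using congrArg (fun p => Polynomial.coeff p 0) hh)
    have heq : (Polynomial.X ^ 2 + Polynomial.C cc) * Polynomial.C r1
        = Polynomial.C (c - Polynomial.C ε) := by
      rw [Polynomial.C_sub]
      linear_combination -hc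
    have hdeg := congrArg Polynomial.natDegree heq
    rw [Polynomial.natDegree_mul (by rw [← hfB2]; exact hfB0) hCr1,
      Polynomial.natDegree_C, Polynomial.natDegree_X_pow_add_C] at hdeg
    simp at hdeg
  rw [hRrep, hr0, hr1] at hPrep
  rw [hSrep, hs0] at hQrep
  simp only [Polynomial.C_0, mul_zero, zero_mul, add_zero, zero_add] at hPrep hQrep
  refine ⟨ε, ω, hε2, hω3, ?_, ?_⟩
  · apply eIso.injective
    rw [eIso_CX0]
    exact hPrep
  · apply eIso.injective
    rw [eIso_CX1]
    exact hQrep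

end
end

section
/- Let r ∈ ℂ[z,t] and let φ be a ℂ[x]-algebra automorphism of ℂ[x][z,t] with φ(z) ≡ z + x·f and φ(t) ≡ t + x·g modulo (x²) for some f, g ∈ ℂ[z,t]. Then f_z + g_t = 0, i.e., there exists h ∈ ℂ[z,t] with h_t = f and h_z = -g. -/
open MvPolynomial

/-- The inclusion ℂ[z,t] ⊆ ℂ[x][z,t]. -/
noncomputable def liftZT : MvPolynomial (Fin 2) ℂ →+* MvPolynomial (Fin 2) (Polynomial ℂ) :=
  MvPolynomial.map (algebraMap ℂ (Polynomial ℂ))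

lemma pderiv_liftZT (i : Fin 2) (p : MvPolynomial (Fin 2) ℂ) :
    pderiv i (liftZT p) = liftZT (pderiv i p) := pderiv_map

lemma chain (s : Fin 2 → MvPolynomial (Fin 2) (Polynomial ℂ))
    (i : Fin 2) (p : MvPolynomial (Fin 2) (Polynomial ℂ)) :
    pderiv i (aeval s p) = ∑ j : Fin 2, aeval s (pderiv j p) * pderiv i (s j) := by
  induction p using MvPolynomial.induction_on with
  | C a => simp [algebraMap_eq]
  | add p q hp hq => simp only [map_add, hp, hq, add_mul, ← Finset.sum_add_distrib]
  | mul_X p n hp =>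
    rw [map_mul, aeval_X, pderiv_mul, hp, Fin.sum_univ_two, Fin.sum_univ_two]
    fin_cases n <;>
      simp [pderiv_mul, pderiv_X_self, pderiv_X_of_ne, map_add, map_mul, aeval_X] <;> ring


lemma exists_C_of_isUnit (D : MvPolynomial (Fin 2) (Polynomial ℂ)) (hD : IsUnit D) :
    ∃ c : ℂ, D = C (Polynomial.C c) := by
  set R := Polynomial ℂ
  set e1 := MvPolynomial.finSuccEquiv R 1
  have h1 : IsUnit (e1 D) := hD.map e1
  obtain ⟨r, hr, hCr⟩ := Polynomial.isUnit_iff.mp h1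
  set e2 := MvPolynomial.finSuccEquiv R 0
  have h2 : IsUnit (e2 r) := hr.map e2
  obtain ⟨r2, hr2, hCr2⟩ := Polynomial.isUnit_iff.mp h2
  set e3 := MvPolynomial.isEmptyAlgEquiv R (Fin 0)
  set u := e3 r2 with hu
  have hru : IsUnit u := hr2.map e3
  obtain ⟨c, hc, hcu⟩ := Polynomial.isUnit_iff.mp hru
  refine ⟨c, ?_⟩
  have hr2u : r2 = MvPolynomial.C u := by
    have h := e3.symm.commutes u
    rw [Algebra.algebraMap_self_apply] at h
    rw [← e3.symm_apply_apply r2, ← hu, h, MvPolynomial.algebraMap_eq]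
  have halg2 : Polynomial.C (MvPolynomial.C u : MvPolynomial (Fin 0) R)
      = algebraMap R (Polynomial (MvPolynomial (Fin 0) R)) u := by
    simp [MvPolynomial.algebraMap_eq]
  have hrC : r = MvPolynomial.C u := by
    rw [← e2.symm_apply_apply r, ← hCr2, hr2u, halg2, e2.symm.commutes, MvPolynomial.algebraMap_eq]
  have halg1 : Polynomial.C (MvPolynomial.C u : MvPolynomial (Fin 1) R)
      = algebraMap R (Polynomial (MvPolynomial (Fin 1) R)) u := by
    simp [MvPolynomial.algebraMap_eq]
  have hDC : D = MvPolynomial.C u := by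
    rw [← e1.symm_apply_apply D, ← hCr, hrC, halg1, e1.symm.commutes, MvPolynomial.algebraMap_eq]
  rw [hDC, ← hcu]

theorem part1
    (φ : MvPolynomial (Fin 2) (Polynomial ℂ) ≃ₐ[Polynomial ℂ]
      MvPolynomial (Fin 2) (Polynomial ℂ))
    (f g : MvPolynomial (Fin 2) ℂ)
    (hz : φ (X 0) - (X 0 + C Polynomial.X * liftZT f) ∈
      Ideal.span {(C (Polynomial.X ^ 2) : MvPolynomial (Fin 2) (Polynomial ℂ))})
    (ht : φ (X 1) - (X 1 + C Polynomial.X * liftZT g) ∈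
      Ideal.span {(C (Polynomial.X ^ 2) : MvPolynomial (Fin 2) (Polynomial ℂ))}) :
    pderiv 0 f + pderiv 1 g = 0 := by
  classical
  set s : Fin 2 → MvPolynomial (Fin 2) (Polynomial ℂ) := fun i => φ (X i) with hs
  set s' : Fin 2 → MvPolynomial (Fin 2) (Polynomial ℂ) := fun i => φ.symm (X i) with hs'
  have hφ : ∀ p, φ p = aeval s p := by
    intro p
    exact DFunLike.congr_fun (MvPolynomial.aeval_unique φ.toAlgHom) p
  have hkey : ∀ j, aeval s (s' j) = X j := by
    intro j
    rw [← hφ (s' j)]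
    exact φ.apply_symm_apply _
  have heq : ∀ i j : Fin 2, pderiv i (X j : MvPolynomial (Fin 2) (Polynomial ℂ)) =
      aeval s (pderiv 0 (s' j)) * pderiv i (s 0) + aeval s (pderiv 1 (s' j)) * pderiv i (s 1) := by
    intro i j
    rw [← hkey j, chain s i (s' j), Fin.sum_univ_two]
  set B00 := aeval s (pderiv 0 (s' 0)); set B01 := aeval s (pderiv 1 (s' 0))
  set B10 := aeval s (pderiv 0 (s' 1)); set B11 := aeval s (pderiv 1 (s' 1))
  set P00 := pderiv 0 (s 0); set P01 := pderiv 1 (s 0)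
  set P10 := pderiv 0 (s 1); set P11 := pderiv 1 (s 1)
  have h00 : (1 : MvPolynomial (Fin 2) (Polynomial ℂ)) = B00 * P00 + B01 * P10 := by
    have := heq 0 0; rwa [pderiv_X_self] at this
  have h10 : (0 : MvPolynomial (Fin 2) (Polynomial ℂ)) = B00 * P01 + B01 * P11 := by
    have := heq 1 0; rwa [pderiv_X_of_ne (by decide)] at this
  have h01 : (0 : MvPolynomial (Fin 2) (Polynomial ℂ)) = B10 * P00 + B11 * P10 := by
    have := heq 0 1; rwa [pderiv_X_of_ne (by decide)] at this
  have h11 : (1 : MvPolynomial (Fin 2) (Polynomial ℂ)) = B10 * P01 + B11 * P11 := by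
    have := heq 1 1; rwa [pderiv_X_self] at this
  set D := P00 * P11 - P01 * P10 with hD
  have hDE : D * (B00 * B11 - B01 * B10) = 1 := by
    have hid : D * (B00 * B11 - B01 * B10) =
        (B00 * P00 + B01 * P10) * (B10 * P01 + B11 * P11) -
          (B00 * P01 + B01 * P11) * (B10 * P00 + B11 * P10) := by ring
    rw [hid, ← h00, ← h10, ← h01, ← h11]; ring
  obtain ⟨c, hc⟩ := exists_C_of_isUnit D (IsUnit.of_mul_eq_one _ hDE)
  -- expand D mod x²
  rw [Ideal.mem_span_singleton] at hz ht
  obtain ⟨q0, hq0⟩ := hz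
  obtain ⟨q1, hq1⟩ := ht
  have hs0 : s 0 = X 0 + C Polynomial.X * liftZT f + C (Polynomial.X ^ 2) * q0 := by
    have : φ (X 0) = X 0 + C Polynomial.X * liftZT f + C (Polynomial.X ^ 2) * q0 := by
      linear_combination hq0
    simpa [hs] using this
  have hs1 : s 1 = X 1 + C Polynomial.X * liftZT g + C (Polynomial.X ^ 2) * q1 := by
    have : φ (X 1) = X 1 + C Polynomial.X * liftZT g + C (Polynomial.X ^ 2) * q1 := by
      linear_combination hq1
    simpa [hs] using this
  have hX2 : (C (Polynomial.X ^ 2) : MvPolynomial (Fin 2) (Polynomial ℂ)) =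
      C Polynomial.X * C Polynomial.X := by rw [pow_two, map_mul]
  have pA00 : P00 = 1 + C Polynomial.X * liftZT (pderiv 0 f) +
      C (Polynomial.X ^ 2) * pderiv 0 q0 := by
    rw [show P00 = pderiv 0 (s 0) from rfl, hs0]
    simp [pderiv_mul, pderiv_liftZT, pderiv_X_self]
  have pA01 : P01 = C Polynomial.X * liftZT (pderiv 1 f) +
      C (Polynomial.X ^ 2) * pderiv 1 q0 := by
    rw [show P01 = pderiv 1 (s 0) from rfl, hs0]
    simp [pderiv_mul, pderiv_liftZT, pderiv_X_of_ne (show (0:Fin 2) ≠ 1 by decide)]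
  have pA10 : P10 = C Polynomial.X * liftZT (pderiv 0 g) +
      C (Polynomial.X ^ 2) * pderiv 0 q1 := by
    rw [show P10 = pderiv 0 (s 1) from rfl, hs1]
    simp [pderiv_mul, pderiv_liftZT, pderiv_X_of_ne (show (1:Fin 2) ≠ 0 by decide)]
  have pA11 : P11 = 1 + C Polynomial.X * liftZT (pderiv 1 g) +
      C (Polynomial.X ^ 2) * pderiv 1 q1 := by
    rw [show P11 = pderiv 1 (s 1) from rfl, hs1]
    simp [pderiv_mul, pderiv_liftZT, pderiv_X_self]
  set F0 := liftZT (pderiv 0 f); set F1 := liftZT (pderiv 1 f)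
  set G0 := liftZT (pderiv 0 g); set G1 := liftZT (pderiv 1 g)
  set cx := (C Polynomial.X : MvPolynomial (Fin 2) (Polynomial ℂ)) with hcx
  have hlift : liftZT (pderiv 0 f + pderiv 1 g) = F0 + G1 := map_add _ _ _
  have hJ : C (Polynomial.C c) - 1 - cx * liftZT (pderiv 0 f + pderiv 1 g) =
      cx * (cx * (F0 * G1 + pderiv 0 q0 + pderiv 1 q1 +
        cx * (F0 * pderiv 1 q1 + G1 * pderiv 0 q0) +
        cx * cx * (pderiv 0 q0 * pderiv 1 q1) -
        (F1 + cx * pderiv 1 q0) * (G0 + cx * pderiv 0 q1))) := by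
    rw [hlift, ← hc, hD, pA00, pA01, pA10, pA11, hX2]
    ring
  -- extract coefficients
  have hcoeff : ∀ m : Fin 2 →₀ ℕ, coeff m (pderiv 0 f + pderiv 1 g) = 0 := by
    intro m
    have h1 := congrArg (MvPolynomial.coeff m) hJ
    simp only [coeff_sub, hcx, coeff_C_mul, coeff_C, coeff_one] at h1
    have h2 := congrArg (fun p : Polynomial ℂ => p.coeff 1) h1
    have hmc : MvPolynomial.coeff m (liftZT (pderiv 0 f + pderiv 1 g)) =
        Polynomial.C (coeff m (pderiv 0 f + pderiv 1 g)) := by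
      simp [liftZT, MvPolynomial.coeff_map, Polynomial.algebraMap_eq]
    rw [hmc] at h2
    simp only [Polynomial.coeff_sub, apply_ite (fun p : Polynomial ℂ => p.coeff 1),
      Polynomial.coeff_C, Polynomial.coeff_one, Polynomial.coeff_X_mul,
      Polynomial.coeff_C_zero, Polynomial.coeff_X_mul_zero] at h2
    norm_num at h2
    rw [coeff_add]
    linear_combination -h2
  exact MvPolynomial.ext _ _ fun m => by rw [hcoeff m, coeff_zero]

noncomputable def antider (i : Fin 2) (p : MvPolynomial (Fin 2) ℂ) : MvPolynomial (Fin 2) ℂ :=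
  Finsupp.sum (AddMonoidAlgebra.coeff p) fun m a => monomial (m + Finsupp.single i 1) (a / (m i + 1))

lemma antider_zero (i : Fin 2) : antider i 0 = 0 := by unfold antider; exact Finsupp.sum_zero_index

lemma antider_add (i : Fin 2) (p q : MvPolynomial (Fin 2) ℂ) :
    antider i (p + q) = antider i p + antider i q := by
  unfold antider
  exact Finsupp.sum_add_index' (fun m => by simp) (fun m a b => by rw [add_div, map_add])

lemma antider_monomial (i : Fin 2) (m : Fin 2 →₀ ℕ) (a : ℂ) :
    antider i (monomial m a) = monomial (m + Finsupp.single i 1) (a / (m i + 1)) := by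
  unfold antider
  exact Finsupp.sum_single_index (by simp)

lemma antider_neg (i : Fin 2) (p : MvPolynomial (Fin 2) ℂ) :
    antider i (-p) = -antider i p := by
  have h := antider_add i p (-p)
  simp only [add_neg_cancel, antider_zero] at h
  linear_combination -h

lemma pderiv_antider (i : Fin 2) (p : MvPolynomial (Fin 2) ℂ) :
    pderiv i (antider i p) = p := by
  unfold antider
  rw [Finsupp.sum, map_sum]
  conv_rhs => rw [← p.support_sum_monomial_coeff]
  refine Finset.sum_congr rfl fun m _ => ?_
  rw [pderiv_monomial]
  have h1 : m + Finsupp.single i 1 - Finsupp.single i 1 = m := by simp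
  have h2 : (m + Finsupp.single i 1 : Fin 2 →₀ ℕ) i = m i + 1 := by simp
  rw [h1, h2]
  have hne : ((m i : ℂ) + 1) ≠ 0 := Nat.cast_add_one_ne_zero (m i)
  congr 1
  push_cast
  exact div_mul_cancel₀ _ hne

lemma pderiv_antider_swap (p : MvPolynomial (Fin 2) ℂ) :
    pderiv 1 (antider 0 p) = antider 0 (pderiv 1 p) := by
  induction p using MvPolynomial.induction_on' with
  | add p q hp hq => rw [antider_add, map_add, map_add, antider_add, hp, hq]
  | monomial m a =>
    rw [antider_monomial, pderiv_monomial, pderiv_monomial, antider_monomial]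
    have hidx : m + Finsupp.single 0 1 - Finsupp.single 1 1
        = m - Finsupp.single 1 1 + Finsupp.single 0 1 := by
      ext j
      simp only [Finsupp.add_apply, Finsupp.tsub_apply]
      fin_cases j <;> simp [Finsupp.single_apply]
    have hc1 : (m + Finsupp.single 0 1 : Fin 2 →₀ ℕ) 1 = m 1 := by simp [Finsupp.single_apply]
    have hc0 : (m - Finsupp.single 1 1 : Fin 2 →₀ ℕ) 0 = m 0 := by simp [Finsupp.tsub_apply, Finsupp.single_apply]
    rw [hidx, hc1, hc0]
    congr 1
    ring

lemma pderiv_comm01 (p : MvPolynomial (Fin 2) ℂ) :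
    pderiv 0 (pderiv 1 p) = pderiv 1 (pderiv 0 p) := by
  induction p using MvPolynomial.induction_on' with
  | add p q hp hq => simp only [map_add, hp, hq]
  | monomial m a =>
    simp only [pderiv_monomial]
    have hidx : m - Finsupp.single 1 1 - Finsupp.single 0 1
        = m - Finsupp.single 0 1 - Finsupp.single 1 1 := by
      ext j; simp only [Finsupp.tsub_apply]; omega
    have hc0 : (m - Finsupp.single 1 1 : Fin 2 →₀ ℕ) 0 = m 0 := by simp [Finsupp.tsub_apply, Finsupp.single_apply]
    have hc1 : (m - Finsupp.single 0 1 : Fin 2 →₀ ℕ) 1 = m 1 := by simp [Finsupp.tsub_apply, Finsupp.single_apply]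
    rw [hidx, hc0, hc1]
    congr 1
    ring
theorem stmt9
    (φ : MvPolynomial (Fin 2) (Polynomial ℂ) ≃ₐ[Polynomial ℂ]
      MvPolynomial (Fin 2) (Polynomial ℂ))
    (f g : MvPolynomial (Fin 2) ℂ)
    (hz : φ (X 0) - (X 0 + C Polynomial.X * liftZT f) ∈
      Ideal.span {(C (Polynomial.X ^ 2) : MvPolynomial (Fin 2) (Polynomial ℂ))})
    (ht : φ (X 1) - (X 1 + C Polynomial.X * liftZT g) ∈
      Ideal.span {(C (Polynomial.X ^ 2) : MvPolynomial (Fin 2) (Polynomial ℂ))}) :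
    pderiv 0 f + pderiv 1 g = 0 ∧
      ∃ h : MvPolynomial (Fin 2) ℂ, pderiv 1 h = f ∧ pderiv 0 h = -g := by
  have hd : pderiv 0 f + pderiv 1 g = 0 := part1 φ f g hz ht
  refine ⟨hd, ?_⟩
  set h₀ := antider 1 f with hh0
  have hf : pderiv 1 h₀ = f := pderiv_antider 1 f
  set w := pderiv 0 h₀ + g with hw
  have hw1 : pderiv 1 w = 0 := by
    rw [hw, map_add, ← pderiv_comm01, hf]
    linear_combination hd
  set k := antider 0 (-w) with hk
  have hk0 : pderiv 0 k = -w := pderiv_antider 0 (-w)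
  have hk1 : pderiv 1 k = 0 := by
    rw [hk, pderiv_antider_swap, map_neg, hw1, neg_zero, antider_zero]
  refine ⟨h₀ + k, ?_, ?_⟩
  · rw [map_add, hf, hk1, add_zero]
  · rw [map_add, hk0, hw]
    ring
end

section
/- Every polynomial automorphism of the affine plane preserving the cuspidal cubic curve {z² + t³ = 0} and arising as the exponential of a locally nilpotent derivation must be the identity; equivalently, every locally nilpotent derivation D of ℂ[z,t] with D(z²+t³) ∈ (z²+t³) is zero. -/
open MvPolynomial

section AuxLND
set_option linter.unusedSectionVars false

variable {R : Type*} [CommRing R] [IsDomain R] [Algebra ℂ R] [CharZero R]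
variable (D : Derivation ℂ R R)

private lemma iter_zero (n : ℕ) : (⇑D)^[n] 0 = 0 :=
  Function.iterate_fixed (map_zero D) n

private lemma iter_add (n : ℕ) (x y : R) :
    (⇑D)^[n] (x + y) = (⇑D)^[n] x + (⇑D)^[n] y := by
  induction n generalizing x y with
  | zero => rfl
  | succ n ih => rw [Function.iterate_succ_apply, map_add, ih,
      Function.iterate_succ_apply, Function.iterate_succ_apply]

private lemma iter_mono {a : R} {m n : ℕ} (h : (⇑D)^[m] a = 0) (hmn : m ≤ n) :
    (⇑D)^[n] a = 0 := by
  obtain ⟨k, rfl⟩ := Nat.exists_eq_add_of_le hmn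
  rw [Nat.add_comm, Function.iterate_add_apply, h, iter_zero]

/-- Top term of the iterated Leibniz rule. -/
private lemma iter_top : ∀ N : ℕ, ∀ m n : ℕ, ∀ a b : R, m + n = N →
    (⇑D)^[m+1] a = 0 → (⇑D)^[n+1] b = 0 →
    (⇑D)^[m+n] (a * b) = (m+n).choose m • ((⇑D)^[m] a * (⇑D)^[n] b) := by
  intro N
  induction N with
  | zero =>
    rintro m n a b h ha hb
    obtain ⟨rfl, rfl⟩ : m = 0 ∧ n = 0 := by omega
    simp
  | succ N ih =>
    rintro m n a b h ha hb
    have key : (⇑D)^[m+n] (a * b) = (⇑D)^[N] (a * D b) + (⇑D)^[N] (D a * b) := by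
      rw [show m + n = N + 1 from h, Function.iterate_succ_apply, D.leibniz,
        smul_eq_mul, smul_eq_mul, mul_comm b (D a), iter_add]
    match m, n with
    | 0, 0 => omega
    | 0, q+1 =>
      have ha' : D a = 0 := by simpa using ha
      have e1 := ih 0 q a (D b) (by omega) ha
        (by rw [← Function.iterate_succ_apply]; exact hb)
      rw [← Function.iterate_succ_apply (f := ⇑D) (n := q),
        show (0:ℕ) + q = N by omega] at e1
      rw [key, e1, ha', zero_mul, iter_zero, add_zero]
      simp
    | p+1, 0 =>
      obtain rfl : p = N := by omega
      have hb' : D b = 0 := by simpa using hb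
      have e2 := ih p 0 (D a) b (by omega)
        (by rw [← Function.iterate_succ_apply]; exact ha) hb
      rw [← Function.iterate_succ_apply (f := ⇑D) (n := p),
        show p + (0:ℕ) = p by omega] at e2
      rw [key, e2, hb', mul_zero, iter_zero, zero_add]
      simp [Nat.choose_self]
    | p+1, q+1 =>
      have e1 := ih (p+1) q a (D b) (by omega) ha
        (by rw [← Function.iterate_succ_apply]; exact hb)
      rw [← Function.iterate_succ_apply (f := ⇑D) (n := q),
        show p + 1 + q = N by omega] at e1
      have e2 := ih p (q+1) (D a) b (by omega)
        (by rw [← Function.iterate_succ_apply]; exact ha) hb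
      rw [← Function.iterate_succ_apply (f := ⇑D) (n := p),
        show p + (q + 1) = N by omega] at e2
      rw [key, e1, e2, ← add_nsmul]
      congr 1
      rw [show p + 1 + (q + 1) = N + 1 by omega,
        show N = p + q + 1 by omega, Nat.choose_succ_succ (p+q+1) p]
      simp only [Nat.succ_eq_add_one]
      omega

/-- `ν(ab) = ν a + ν b` for a locally nilpotent derivation on a domain. -/
private lemma nu_mul {a b : R} {m n : ℕ}
    (ha0 : (⇑D)^[m] a ≠ 0) (ha1 : (⇑D)^[m+1] a = 0)
    (hb0 : (⇑D)^[n] b ≠ 0) (hb1 : (⇑D)^[n+1] b = 0) :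
    (⇑D)^[m+n] (a * b) ≠ 0 ∧ (⇑D)^[m+n+1] (a * b) = 0 := by
  have htop := iter_top D (m+n) m n a b rfl ha1 hb1
  constructor
  · rw [htop, nsmul_eq_mul]
    exact mul_ne_zero
      (Nat.cast_ne_zero.2 (Nat.choose_pos (Nat.le_add_right m n)).ne')
      (mul_ne_zero ha0 hb0)
  · rw [Function.iterate_succ_apply', htop, map_nsmul, D.leibniz, smul_eq_mul,
      smul_eq_mul, ← Function.iterate_succ_apply' (f := ⇑D) (n := m),
      ← Function.iterate_succ_apply' (f := ⇑D) (n := n), ha1, hb1]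
    simp

private lemma exists_nu {a : R} (ha : a ≠ 0) (h : ∃ n, (⇑D)^[n] a = 0) :
    ∃ m, (⇑D)^[m] a ≠ 0 ∧ (⇑D)^[m+1] a = 0 := by
  classical
  have h' : ∃ k, (⇑D)^[k+1] a = 0 := by
    obtain ⟨n, hn⟩ := h
    cases n with
    | zero => exact absurd hn ha
    | succ k => exact ⟨k, hn⟩
  refine ⟨Nat.find h', ?_, Nat.find_spec h'⟩
  intro h0
  by_cases hf : Nat.find h' = 0
  · rw [hf] at h0; exact ha h0
  · obtain ⟨k, hk⟩ := Nat.exists_eq_succ_of_ne_zero hf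
    rw [hk] at h0
    exact Nat.find_min h' (by omega) h0

private lemma nu_unique {a : R} {m n : ℕ}
    (hm0 : (⇑D)^[m] a ≠ 0) (hm1 : (⇑D)^[m+1] a = 0)
    (hn0 : (⇑D)^[n] a ≠ 0) (hn1 : (⇑D)^[n+1] a = 0) : m = n := by
  by_contra hne
  rcases Nat.lt_or_ge m n with h | h
  · exact hn0 (iter_mono D hm1 (by omega))
  · exact hm0 (iter_mono D hn1 (by omega))

private lemma iter_alg (c : ℂ) (x : R) (n : ℕ) :
    (⇑D)^[n] (algebraMap ℂ R c * x) = algebraMap ℂ R c * (⇑D)^[n] x := by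
  induction n generalizing x with
  | zero => rfl
  | succ n ih =>
    rw [Function.iterate_succ_apply, D.leibniz, D.map_algebraMap, smul_zero,
      add_zero, smul_eq_mul, ih, Function.iterate_succ_apply]

end AuxLND

/-- Every locally nilpotent derivation D of ℂ[z,t] with D(z²+t³) ∈ (z²+t³) is zero. -/
theorem stmt11
    (D : Derivation ℂ (MvPolynomial (Fin 2) ℂ) (MvPolynomial (Fin 2) ℂ))
    (hln : ∀ f : MvPolynomial (Fin 2) ℂ, ∃ n : ℕ, (fun g => D g)^[n] f = 0)
    (hD : D (X 0 ^ 2 + X 1 ^ 3) ∈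
      Ideal.span {(X 0 ^ 2 + X 1 ^ 3 : MvPolynomial (Fin 2) ℂ)}) :
    D = 0 := by
  set R := MvPolynomial (Fin 2) ℂ with hR
  haveI : CharZero R := by
    refine charZero_of_injective_algebraMap (R := ℂ) ?_
    rw [MvPolynomial.algebraMap_eq]
    exact C_injective (Fin 2) ℂ
  have hln' : ∀ f : R, ∃ n : ℕ, (⇑D)^[n] f = 0 := hln
  set f : R := X 0 ^ 2 + X 1 ^ 3 with hf
  have hfne : f ≠ 0 := by
    intro h
    have := congrArg (eval fun _ => (1:ℂ)) h
    simp [hf] at this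
  -- Step 1 : D f = 0
  rw [Ideal.mem_span_singleton] at hD
  obtain ⟨g, hg⟩ := hD
  have hDf : D f = 0 := by
    by_cases hgz : g = 0
    · rw [hg, hgz, mul_zero]
    · exfalso
      obtain ⟨mf, hmf0, hmf1⟩ := exists_nu D hfne (hln' f)
      obtain ⟨mg, hmg0, hmg1⟩ := exists_nu D hgz (hln' g)
      have h1 := (nu_mul D hmf0 hmf1 hmg0 hmg1).1
      have h2 : (⇑D)^[mf] (f * g) = 0 := by
        rw [← hg, ← Function.iterate_succ_apply]
        exact hmf1
      exact h1 (iter_mono D h2 (Nat.le_add_right mf mg))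
  -- Step 2 : the basic relation 2 z Dz + 3 t² Dt = 0
  have hrel : (2:R) * X 0 * D (X 0) + (3:R) * X 1 ^ 2 * D (X 1) = 0 := by
    have h := hDf
    rw [hf, map_add, D.leibniz_pow, D.leibniz_pow] at h
    simp only [nsmul_eq_mul, smul_eq_mul, Nat.cast_ofNat] at h
    linear_combination h
  -- primality of z = X 0
  have hzprime : Prime (X 0 : R) := by
    rw [← MulEquiv.prime_iff (finSuccEquiv ℂ 1).toMulEquiv]
    have : (finSuccEquiv ℂ 1).toMulEquiv (X 0 : R) = Polynomial.X := by
      simpa using finSuccEquiv_X_zero (R := ℂ) (n := 1)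
    rw [this]
    exact Polynomial.prime_X
  have hdvd : (X 0 : R) ∣ ((3:R) * X 1 ^ 2) * D (X 1) :=
    ⟨-((2:R) * D (X 0)), by linear_combination hrel⟩
  have hnd : ¬ (X 0 : R) ∣ (3:R) * X 1 ^ 2 := by
    rintro ⟨u, hu⟩
    have := congrArg (eval fun i : Fin 2 => if i = 0 then (0:ℂ) else 1) hu
    simp at this
  obtain ⟨b, hb⟩ : (X 0 : R) ∣ D (X 1) := (hzprime.2.2 _ _ hdvd).resolve_left hnd
  -- cancel z to solve for D z
  have hz0 : (X 0 : R) ≠ 0 := X_ne_zero 0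
  have ht0 : (X 1 : R) ≠ 0 := X_ne_zero 1
  have hC2 : ((2:R)) = C (2:ℂ) := (map_ofNat (C : ℂ →+* R) 2).symm
  have hC3 : ((3:R)) = C (3:ℂ) := (map_ofNat (C : ℂ →+* R) 3).symm
  have hDz : D (X 0) = X 1 * (X 1 * (C (-3/2 : ℂ) * b)) := by
    apply mul_left_cancel₀ (show (2:R) ≠ 0 by norm_num)
    have key : X 0 * ((2:R) * D (X 0) + (3:R) * X 1 ^ 2 * b) = 0 := by
      linear_combination hrel + ((3:R) * X 1 ^ 2) * hb.symm
    have key2 : (2:R) * D (X 0) + (3:R) * X 1 ^ 2 * b = 0 :=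
      (mul_eq_zero.1 key).resolve_left hz0
    have hc : (2:R) * C (-3/2 : ℂ) = -(3:R) := by
      rw [hC2, hC3, ← map_mul, ← map_neg]
      norm_num
    linear_combination key2 - (X 1 ^ 2 * b) * hc
  -- case split on b
  by_cases hbz : b = 0
  · have hz : D (X 0) = 0 := by rw [hDz, hbz]; ring
    have ht : D (X 1) = 0 := by rw [hb, hbz, mul_zero]
    exact derivation_ext fun i => by
      fin_cases i <;> simp [hz, ht]
  · exfalso
    obtain ⟨p, hp0, hp1⟩ := exists_nu D hz0 (hln' (X 0))
    obtain ⟨q, hq0, hq1⟩ := exists_nu D ht0 (hln' (X 1))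
    obtain ⟨r, hr0, hr1⟩ := exists_nu D hbz (hln' b)
    -- ν (C (-3/2) * b) = r
    have hcb0 : (⇑D)^[r] (C (-3/2 : ℂ) * b) ≠ 0 := by
      rw [show (C (-3/2 : ℂ) : R) = algebraMap ℂ R (-3/2 : ℂ) by
        rw [MvPolynomial.algebraMap_eq], iter_alg]
      exact mul_ne_zero (by
        simp only [ne_eq, map_eq_zero_iff _ ((algebraMap ℂ R).injective)]
        norm_num) hr0
    have hcb1 : (⇑D)^[r+1] (C (-3/2 : ℂ) * b) = 0 := by
      rw [show (C (-3/2 : ℂ) : R) = algebraMap ℂ R (-3/2 : ℂ) by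
        rw [MvPolynomial.algebraMap_eq], iter_alg, hr1, mul_zero]
    -- ν (X1 * (C * b)) = q + r ; ν (X1 * (X1 * (C*b))) = q + (q+r)
    obtain ⟨h10, h11⟩ := nu_mul D hq0 hq1 hcb0 hcb1
    obtain ⟨h20, h21⟩ := nu_mul D hq0 hq1 h10 h11
    -- so ν (D (X 0)) = 2q + r, giving p = 2q + r + 1
    have hp' : p = q + (q + r) + 1 := by
      refine nu_unique D hp0 hp1 ?_ ?_
      · rw [Function.iterate_succ_apply, hDz]; exact h20
      · rw [Function.iterate_succ_apply, hDz]; exact h21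
    -- ν (X0 * b) = p + r, giving q = p + r + 1
    obtain ⟨h30, h31⟩ := nu_mul D hp0 hp1 hr0 hr1
    have hq' : q = p + r + 1 := by
      refine nu_unique D hq0 hq1 ?_ ?_
      · rw [Function.iterate_succ_apply, hb]; exact h30
      · rw [Function.iterate_succ_apply, hb]; exact h31
    omega
end

section
/- Let λ, μ ∈ ℂ*. The hypersurface V(λ(x²y+z²+x+t³) - μx) ⊂ ℂ⁴ has a singular point if and only if λ = μ. -/
open MvPolynomial

/-- V(λ(x²y+z²+x+t³) - μx) has a singular point iff λ = μ. -/
theorem stmt15 (lam mu : ℂ) (hlam : lam ≠ 0) (hmu : mu ≠ 0) :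
    (∃ p : Fin 4 → ℂ,
        eval p (C lam * (X 0 ^ 2 * X 1 + X 2 ^ 2 + X 0 + X 3 ^ 3) - C mu * X 0) = 0 ∧
        ∀ i : Fin 4,
          eval p (pderiv i
            (C lam * (X 0 ^ 2 * X 1 + X 2 ^ 2 + X 0 + X 3 ^ 3) - C mu * X 0)) = 0) ↔
      lam = mu := by
  constructor
  · rintro ⟨p, h0, hd⟩
    have h1 := hd 1
    have h2 := hd 0
    simp [pderiv_X, Pi.single_apply] at h1 h2
    have hx : p 0 = 0 := h1.resolve_left hlam
    rw [hx] at h2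
    exact sub_eq_zero.mp (by simpa using h2)
  · rintro rfl
    refine ⟨0, by simp, fun i => ?_⟩
    fin_cases i <;> simp [pderiv_X, Pi.single_apply]
end
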